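/- For every real number z with 0 < z < 1, the double polylogarithm Li_{(2,1)}(z) := ∑_{0<m<n} zⁿ/(m²·n) satisfies Li_{(2,1)}(z) = −(π²/6)·log(1−z) − 2·ζ(3) − Li₂(1−z)·log(1−z) + 2·Li₃(1−z). -/

import Mathlib

open Real Filter Topology Set

set_option maxHeartbeats 1000000

/-- The polylogarithm `Li_k(z) = ∑_{n=1}^∞ zⁿ/n^k` for `|z| < 1`. -/
noncomputable def Li (k : ℕ) (z : ℝ) : ℝ := ∑' n : ℕ, z ^ (n + 1) / ((n : ℝ) + 1) ^ k

/-- The double polylogarithm `Li_{(2,1)}(z) = ∑_{0<m<n} zⁿ/(m²·n)` for `|z| < 1`. -/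
noncomputable def Li21 (z : ℝ) : ℝ :=
  ∑' p : {q : ℕ+ × ℕ+ // q.1 < q.2},
    z ^ ((p.1.2 : ℕ)) / (((p.1.1 : ℕ) : ℝ) ^ 2 * ((p.1.2 : ℕ) : ℝ))

/-- `ζ(3) = ∑_{n=1}^∞ 1/n³`. -/
noncomputable def zeta3 : ℝ := ∑' n : ℕ, 1 / ((n : ℝ) + 1) ^ 3

/- ### Auxiliary lemmas -/

lemma Li_aux_summable_inv_sq : Summable (fun n : ℕ => 1 / ((n : ℝ) + 1) ^ 2) := by
  have h := (summable_nat_add_iff 1).2 (Real.summable_one_div_nat_pow.mpr (le_refl 2))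
  refine h.congr fun n => ?_
  push_cast
  ring

lemma Li_eq_mul (k : ℕ) (x : ℝ) :
    Li k x = x * ∑' n : ℕ, x ^ n / ((n : ℝ) + 1) ^ k := by
  rw [Li, ← tsum_mul_left]
  refine tsum_congr fun n => ?_
  ring

lemma hasDerivAt_Li (k : ℕ) {x : ℝ} (hx : |x| < 1) :
    HasDerivAt (Li (k + 1)) (∑' n : ℕ, x ^ n / ((n : ℝ) + 1) ^ k) x := by
  set r : ℝ := (|x| + 1) / 2 with hr
  have hr0 : 0 < r := by positivity
  have hxr : |x| < r := by rw [hr]; linarith [abs_nonneg x]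
  have hr1 : r < 1 := by rw [hr]; linarith
  have H := hasDerivAt_tsum_of_isPreconnected
    (u := fun n : ℕ => r ^ n) (t := Ioo (-r) r)
    (g := fun (n : ℕ) (z : ℝ) => z ^ (n + 1) / ((n : ℝ) + 1) ^ (k + 1))
    (g' := fun (n : ℕ) (y : ℝ) => y ^ n / ((n : ℝ) + 1) ^ k)
    (summable_geometric_of_lt_one hr0.le hr1) isOpen_Ioo
    (convex_Ioo _ _).isPreconnected
    (fun n y _ => by
      have hne : ((n : ℝ) + 1) ≠ 0 := by positivity
      have h := (hasDerivAt_pow (n + 1) y).div_const (((n : ℝ) + 1) ^ (k + 1))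
      refine h.congr_deriv ?_
      push_cast
      field_simp
      ring)
    (fun n y hy => by
      have hyr : |y| ≤ r := le_of_lt (abs_lt.2 ⟨hy.1, hy.2⟩)
      have h1 : ‖y ^ n / ((n : ℝ) + 1) ^ k‖ = |y| ^ n / ((n : ℝ) + 1) ^ k := by
        rw [norm_div, norm_pow, norm_pow, Real.norm_eq_abs, Real.norm_eq_abs,
          abs_of_nonneg (by positivity : (0:ℝ) ≤ (n : ℝ) + 1)]
      rw [h1]
      calc |y| ^ n / ((n : ℝ) + 1) ^ k ≤ |y| ^ n :=
            div_le_self (by positivity) (one_le_pow₀ (by linarith [Nat.cast_nonneg (α := ℝ) n]))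
        _ ≤ r ^ n := pow_le_pow_left₀ (abs_nonneg _) hyr n)
    (mem_Ioo.2 ⟨neg_neg_iff_pos.mpr hr0, hr0⟩)
    (by
      refine summable_zero.congr fun n => ?_
      simp [zero_pow (Nat.succ_ne_zero n)])
    (mem_Ioo.2 ⟨neg_lt_of_abs_lt hxr, lt_of_abs_lt hxr⟩)
  exact H

lemma Li_one_eq {x : ℝ} (hx : |x| < 1) : Li 1 x = -Real.log (1 - x) := by
  rw [Li, ← (hasSum_pow_div_log_of_abs_lt_one hx).tsum_eq]
  refine tsum_congr fun n => ?_
  rw [pow_one]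

lemma D_one_eq {x : ℝ} (hx0 : x ≠ 0) (hx : |x| < 1) :
    (∑' n : ℕ, x ^ n / ((n : ℝ) + 1) ^ 1) = -Real.log (1 - x) / x := by
  have h := Li_eq_mul 1 x
  rw [Li_one_eq hx] at h
  rw [eq_div_iff hx0]
  linarith [h]

lemma D_succ_eq (k : ℕ) {x : ℝ} (hx0 : x ≠ 0) :
    (∑' n : ℕ, x ^ n / ((n : ℝ) + 1) ^ k) = Li k x / x := by
  rw [eq_div_iff hx0, Li_eq_mul k x]
  ring

lemma Li_zero (k : ℕ) : Li k 0 = 0 := by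
  rw [Li]
  convert tsum_zero with n
  simp [zero_pow (Nat.succ_ne_zero n)]

lemma continuousOn_Li (k : ℕ) (hk : 2 ≤ k) :
    ContinuousOn (Li k) (Icc (-1 : ℝ) 1) := by
  rw [show Li k = fun x => ∑' n : ℕ, x ^ (n + 1) / ((n : ℝ) + 1) ^ k from rfl]
  refine continuousOn_tsum (u := fun n : ℕ => 1 / ((n : ℝ) + 1) ^ 2)
    (fun n => ((continuous_pow (n + 1)).div_const _).continuousOn)
    Li_aux_summable_inv_sq (fun n x hx => ?_)
  have hx1 : |x| ≤ 1 := abs_le.2 ⟨hx.1, hx.2⟩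
  have h1 : ‖x ^ (n + 1) / ((n : ℝ) + 1) ^ k‖ = |x| ^ (n + 1) / ((n : ℝ) + 1) ^ k := by
    rw [norm_div, norm_pow, norm_pow, Real.norm_eq_abs, Real.norm_eq_abs,
      abs_of_nonneg (by positivity : (0:ℝ) ≤ (n : ℝ) + 1)]
  rw [h1]
  have hn1 : (1 : ℝ) ≤ (n : ℝ) + 1 := by linarith [Nat.cast_nonneg (α := ℝ) n]
  refine div_le_div₀ (by norm_num) (pow_le_one₀ (abs_nonneg _) hx1) (by positivity) ?_
  exact pow_le_pow_right₀ hn1 hk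

lemma Li_two_one : Li 2 1 = Real.pi ^ 2 / 6 := by
  have h : HasSum (fun n : ℕ => (1 : ℝ) / ((n : ℕ) + 1 : ℝ) ^ 2) (Real.pi ^ 2 / 6) := by
    have h2 := (hasSum_nat_add_iff' (f := fun n : ℕ => (1 : ℝ) / (n : ℝ) ^ 2) 1).2 hasSum_zeta_two
    simp only [Finset.range_one, Finset.sum_singleton, Nat.cast_zero] at h2
    norm_num at h2
    refine h2.congr_fun fun n => ?_
    push_cast
    ring
  rw [Li, ← h.tsum_eq]
  refine tsum_congr fun n => ?_
  norm_num

lemma Li_three_one : Li 3 1 = zeta3 := by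
  rw [Li, zeta3]
  refine tsum_congr fun n => ?_
  rw [one_pow]

lemma abs_lt_one_of_Ioo {x : ℝ} (hx : x ∈ Ioo (0:ℝ) 1) : |x| < 1 :=
  abs_lt.2 ⟨by linarith [hx.1], hx.2⟩

lemma abs_one_sub_lt_one_of_Ioo {x : ℝ} (hx : x ∈ Ioo (0:ℝ) 1) : |1 - x| < 1 :=
  abs_lt.2 ⟨by linarith [hx.2], by linarith [hx.1]⟩

/-- A function with zero derivative on `(0,1)` and limit `c` at `0⁺` equals `c` on `(0,1)`. -/
lemma eq_const_aux {F : ℝ → ℝ} {c : ℝ}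
    (hd : ∀ x ∈ Ioo (0:ℝ) 1, HasDerivAt F 0 x)
    (hlim : Tendsto F (𝓝[>] (0:ℝ)) (𝓝 c)) :
    ∀ x ∈ Ioo (0:ℝ) 1, F x = c := by
  intro x hx
  have key : ∀ a ∈ Ioo (0:ℝ) x, F x = F a := by
    intro a ha
    have hsub : Icc a x ⊆ Ioo (0:ℝ) 1 := fun y hy =>
      ⟨lt_of_lt_of_le ha.1 hy.1, lt_of_le_of_lt hy.2 hx.2⟩
    have := constant_of_has_deriv_right_zero (f := F) (a := a) (b := x)
      (fun y hy => (hd y (hsub hy)).continuousAt.continuousWithinAt)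
      (fun y hy => (hd y (hsub (Ico_subset_Icc_self hy))).hasDerivWithinAt)
    exact this x ⟨le_of_lt ha.2, le_rfl⟩
  have h2 : Tendsto F (𝓝[>] (0:ℝ)) (𝓝 (F x)) := by
    refine tendsto_const_nhds.congr' ?_
    filter_upwards [Ioo_mem_nhdsGT hx.1] with a ha using key a ha
  exact tendsto_nhds_unique h2 hlim

lemma hasDerivAt_log_one_sub {x : ℝ} (hx : x < 1) :
    HasDerivAt (fun y : ℝ => Real.log (1 - y)) (-(1 - x)⁻¹) x := by
  have hlin : HasDerivAt (fun y : ℝ => 1 - y) (-1) x := by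
    simpa using (hasDerivAt_id x).const_sub (1:ℝ)
  have h := (Real.hasDerivAt_log (by linarith : (1:ℝ) - x ≠ 0)).comp x hlin
  simpa [Function.comp_def] using h

lemma hasDerivAt_Li2 {x : ℝ} (hx : x ∈ Ioo (0:ℝ) 1) :
    HasDerivAt (Li 2) (-Real.log (1 - x) / x) x := by
  have h := hasDerivAt_Li 1 (abs_lt_one_of_Ioo hx)
  rwa [D_one_eq (ne_of_gt hx.1) (abs_lt_one_of_Ioo hx)] at h

lemma hasDerivAt_Li2_one_sub {x : ℝ} (hx : x ∈ Ioo (0:ℝ) 1) :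
    HasDerivAt (fun y : ℝ => Li 2 (1 - y)) (Real.log x / (1 - x)) x := by
  have h1x : (1 : ℝ) - x ∈ Ioo (0:ℝ) 1 := ⟨by linarith [hx.2], by linarith [hx.1]⟩
  have hlin : HasDerivAt (fun y : ℝ => 1 - y) (-1) x := by
    simpa using (hasDerivAt_id x).const_sub (1:ℝ)
  have h := (hasDerivAt_Li 1 (abs_one_sub_lt_one_of_Ioo hx)).comp x hlin
  rw [D_one_eq (ne_of_gt h1x.1) (abs_one_sub_lt_one_of_Ioo hx)] at h
  have : -Real.log (1 - (1 - x)) / (1 - x) * (-1) = Real.log x / (1 - x) := by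
    rw [show (1:ℝ) - (1 - x) = x by ring]
    ring
  rwa [this] at h

lemma hasDerivAt_Li3_one_sub {x : ℝ} (hx : x ∈ Ioo (0:ℝ) 1) :
    HasDerivAt (fun y : ℝ => Li 3 (1 - y)) (-(Li 2 (1 - x) / (1 - x))) x := by
  have h1x : (1 : ℝ) - x ∈ Ioo (0:ℝ) 1 := ⟨by linarith [hx.2], by linarith [hx.1]⟩
  have hlin : HasDerivAt (fun y : ℝ => 1 - y) (-1) x := by
    simpa using (hasDerivAt_id x).const_sub (1:ℝ)
  have h := (hasDerivAt_Li 2 (abs_one_sub_lt_one_of_Ioo hx)).comp x hlin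
  rw [D_succ_eq 2 (ne_of_gt h1x.1)] at h
  have : Li 2 (1 - x) / (1 - x) * (-1) = -(Li 2 (1 - x) / (1 - x)) := by ring
  rwa [this] at h

lemma tendsto_Li_one_sub (k : ℕ) (hk : 2 ≤ k) :
    Tendsto (fun x : ℝ => Li k (1 - x)) (𝓝[>] (0:ℝ)) (𝓝 (Li k 1)) := by
  have hc : ContinuousWithinAt (Li k) (Icc (-1 : ℝ) 1) 1 :=
    (continuousOn_Li k hk) 1 (by norm_num)
  refine hc.tendsto.comp ?_
  rw [tendsto_nhdsWithin_iff]
  constructor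
  · have h : Tendsto (fun x : ℝ => 1 - x) (𝓝 (0:ℝ)) (𝓝 (1 - 0)) :=
      tendsto_const_nhds.sub tendsto_id
    have h2 := h.mono_left (nhdsWithin_le_nhds (s := Ioi (0:ℝ)))
    simpa using h2
  · filter_upwards [Ioo_mem_nhdsGT (zero_lt_one)] with a ha
    exact ⟨by linarith [ha.2], by linarith [ha.1]⟩

lemma tendsto_log_one_sub : Tendsto (fun x : ℝ => Real.log (1 - x)) (𝓝[>] (0:ℝ)) (𝓝 0) := by
  have h : Tendsto (fun y : ℝ => Real.log (1 - y)) (𝓝 (0:ℝ)) (𝓝 (Real.log (1 - 0))) :=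
    (hasDerivAt_log_one_sub (zero_lt_one : (0:ℝ) < 1)).continuousAt.tendsto
  have h2 := h.mono_left (nhdsWithin_le_nhds (s := Ioi (0:ℝ)))
  simpa using h2

lemma tendsto_log_mul_log_one_sub :
    Tendsto (fun x : ℝ => Real.log x * Real.log (1 - x)) (𝓝[>] (0:ℝ)) (𝓝 0) := by
  have hA : Tendsto (fun x : ℝ => Real.log x * x) (𝓝[>] (0:ℝ)) (𝓝 0) := by
    have h := tendsto_log_mul_rpow_nhdsGT_zero (zero_lt_one)
    refine h.congr' ?_
    filter_upwards [self_mem_nhdsWithin] with a (ha : (0:ℝ) < a)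
    rw [Real.rpow_one]
  have hB : Tendsto (fun x : ℝ => Real.log (1 - x) / x) (𝓝[>] (0:ℝ)) (𝓝 (-1)) := by
    have h := (hasDerivAt_log_one_sub (zero_lt_one : (0:ℝ) < 1))
    rw [hasDerivAt_iff_tendsto_slope] at h
    have h2 := h.mono_left (nhdsWithin_mono 0 (fun y hy => ne_of_gt hy))
    have h3 : Tendsto (fun x : ℝ => Real.log (1 - x) / x) (𝓝[>] (0:ℝ)) (𝓝 (-(1 - (0:ℝ))⁻¹)) := by
      refine h2.congr' ?_
      filter_upwards [self_mem_nhdsWithin] with a (ha : (0:ℝ) < a)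
      rw [slope_def_field]
      simp
    simpa using h3
  have h := hA.mul hB
  rw [zero_mul] at h
  refine h.congr' ?_
  filter_upwards [self_mem_nhdsWithin] with a (ha : (0:ℝ) < a)
  field_simp

lemma tendsto_Li2_zero : Tendsto (fun x : ℝ => Li 2 x) (𝓝[>] (0:ℝ)) (𝓝 0) := by
  have h : Tendsto (Li 2) (𝓝 (0:ℝ)) (𝓝 (Li 2 0)) :=
    (hasDerivAt_Li 1 (by norm_num : |(0:ℝ)| < 1)).continuousAt.tendsto
  have h2 := h.mono_left (nhdsWithin_le_nhds (s := Ioi (0:ℝ)))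
  rwa [Li_zero 2] at h2

/-- Euler's reflection formula for the dilogarithm. -/
lemma Li2_reflection {x : ℝ} (hx : x ∈ Ioo (0:ℝ) 1) :
    Li 2 x + Li 2 (1 - x) + Real.log x * Real.log (1 - x) = Real.pi ^ 2 / 6 := by
  have hd : ∀ y ∈ Ioo (0:ℝ) 1,
      HasDerivAt (fun y : ℝ => Li 2 y + Li 2 (1 - y) + Real.log y * Real.log (1 - y)) 0 y := by
    intro y hy
    have hy0 : y ≠ 0 := ne_of_gt hy.1
    have hy1 : (1:ℝ) - y ≠ 0 := by have := hy.2; intro h; linarith [sub_eq_zero.mp h]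
    have h1 := hasDerivAt_Li2 hy
    have h2 := hasDerivAt_Li2_one_sub hy
    have h3 : HasDerivAt Real.log y⁻¹ y := Real.hasDerivAt_log hy0
    have h4 := hasDerivAt_log_one_sub hy.2
    have h5 := h3.mul h4
    have H := (h1.add h2).add h5
    refine H.congr_deriv ?_
    field_simp
    ring
  have hlim : Tendsto (fun y : ℝ => Li 2 y + Li 2 (1 - y) + Real.log y * Real.log (1 - y))
      (𝓝[>] (0:ℝ)) (𝓝 (Real.pi ^ 2 / 6)) := by
    have h := (tendsto_Li2_zero.add (tendsto_Li_one_sub 2 le_rfl)).add tendsto_log_mul_log_one_sub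
    rw [zero_add, add_zero, Li_two_one] at h
    exact h
  exact eq_const_aux hd hlim x hx

/-- The index type for the double polylog. -/
abbrev Li21Idx := {q : ℕ+ × ℕ+ // q.1 < q.2}

/-- Pairs `(a,b) : ℕ × ℕ` correspond to pairs `m = a+1 < n = a+b+2`. -/
def pairEquiv : ℕ × ℕ ≃ Li21Idx where
  toFun ab := ⟨(⟨ab.1 + 1, Nat.succ_pos _⟩, ⟨ab.1 + ab.2 + 2, Nat.succ_pos _⟩), by
    rw [← PNat.coe_lt_coe]
    simp only [PNat.mk_ofNat, PNat.mk_coe]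
    omega⟩
  invFun p := ((p.1.1 : ℕ) - 1, (p.1.2 : ℕ) - (p.1.1 : ℕ) - 1)
  left_inv := by
    rintro ⟨a, b⟩
    simp only [PNat.mk_coe]
    refine Prod.ext ?_ ?_ <;> simp
    omega
  right_inv := by
    rintro ⟨⟨m, n⟩, h⟩
    have hm : 1 ≤ (m : ℕ) := m.one_le
    have hmn : (m : ℕ) < (n : ℕ) := (PNat.coe_lt_coe _ _).mpr h
    refine Subtype.ext (Prod.ext ?_ ?_) <;>
      apply PNat.coe_injective <;> simp <;> omega

lemma summable_pnat_inv_sq : Summable (fun m : ℕ+ => (((m : ℕ) : ℝ) ^ 2)⁻¹) := by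
  rw [← Equiv.pnatEquivNat.symm.summable_iff]
  refine Li_aux_summable_inv_sq.congr fun n => ?_
  simp only [Function.comp_apply, Equiv.pnatEquivNat_symm_apply, Nat.succPNat_coe]
  push_cast
  rw [one_div]

lemma summable_pnat_geom {r : ℝ} (h0 : 0 ≤ r) (h1 : r < 1) :
    Summable (fun n : ℕ+ => r ^ ((n : ℕ) - 1)) := by
  rw [← Equiv.pnatEquivNat.symm.summable_iff]
  refine (summable_geometric_of_lt_one h0 h1).congr fun n => ?_
  simp only [Function.comp_apply, Equiv.pnatEquivNat_symm_apply, Nat.succPNat_coe,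
    Nat.succ_sub_one]

lemma Li21_summable_bound {r : ℝ} (h0 : 0 ≤ r) (h1 : r < 1) :
    Summable (fun p : Li21Idx => r ^ ((p.1.2 : ℕ) - 1) / (((p.1.1 : ℕ) : ℝ)) ^ 2) := by
  have hv : Summable (fun q : ℕ+ × ℕ+ => ((((q.1 : ℕ) : ℝ)) ^ 2)⁻¹ * r ^ ((q.2 : ℕ) - 1)) := by
    exact (summable_pnat_inv_sq.mul_of_nonneg (summable_pnat_geom h0 h1)
      (fun m => by positivity) (fun n => by positivity))
  have := hv.comp_injective (Subtype.coe_injective (p := fun q : ℕ+ × ℕ+ => q.1 < q.2))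
  refine this.congr fun p => ?_
  simp [Function.comp, div_eq_inv_mul]

lemma Li21_hasDerivAt {x : ℝ} (hx : |x| < 1) :
    HasDerivAt Li21
      (∑' p : Li21Idx, x ^ ((p.1.2 : ℕ) - 1) / (((p.1.1 : ℕ) : ℝ)) ^ 2) x := by
  set r : ℝ := (|x| + 1) / 2 with hr
  have hr0 : 0 < r := by positivity
  have hxr : |x| < r := by rw [hr]; linarith [abs_nonneg x]
  have hr1 : r < 1 := by rw [hr]; linarith
  have H := hasDerivAt_tsum_of_isPreconnected
    (u := fun p : Li21Idx => r ^ ((p.1.2 : ℕ) - 1) / (((p.1.1 : ℕ) : ℝ)) ^ 2)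
    (t := Ioo (-r) r)
    (g := fun (p : Li21Idx) (z : ℝ) =>
      z ^ ((p.1.2 : ℕ)) / (((p.1.1 : ℕ) : ℝ) ^ 2 * ((p.1.2 : ℕ) : ℝ)))
    (g' := fun (p : Li21Idx) (y : ℝ) => y ^ ((p.1.2 : ℕ) - 1) / (((p.1.1 : ℕ) : ℝ)) ^ 2)
    (Li21_summable_bound hr0.le hr1) isOpen_Ioo (convex_Ioo _ _).isPreconnected
    (fun p y _ => by
      have hn : 1 ≤ (p.1.2 : ℕ) := p.1.2.one_le
      have hn0 : (((p.1.2 : ℕ)) : ℝ) ≠ 0 := by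
        exact_mod_cast Nat.one_le_iff_ne_zero.mp p.1.2.one_le
      have hm0 : (((p.1.1 : ℕ)) : ℝ) ≠ 0 := by
        exact_mod_cast Nat.one_le_iff_ne_zero.mp p.1.1.one_le
      have h := (hasDerivAt_pow ((p.1.2 : ℕ)) y).div_const
        (((p.1.1 : ℕ) : ℝ) ^ 2 * ((p.1.2 : ℕ) : ℝ))
      refine h.congr_deriv ?_
      field_simp)
    (fun p y hy => by
      have hyr : |y| ≤ r := le_of_lt (abs_lt.2 ⟨hy.1, hy.2⟩)
      have h1 : ‖y ^ ((p.1.2 : ℕ) - 1) / (((p.1.1 : ℕ) : ℝ)) ^ 2‖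
          = |y| ^ ((p.1.2 : ℕ) - 1) / (((p.1.1 : ℕ) : ℝ)) ^ 2 := by
        rw [norm_div, norm_pow, norm_pow, Real.norm_eq_abs, Real.norm_eq_abs,
          abs_of_nonneg (show (0:ℝ) ≤ ((p.1.1 : ℕ) : ℝ) from Nat.cast_nonneg _)]
      rw [h1]
      have hmpos : (0:ℝ) < ((p.1.1 : ℕ) : ℝ) := by exact_mod_cast p.1.1.pos
      exact (div_le_div_iff_of_pos_right (by positivity)).mpr (pow_le_pow_left₀ (abs_nonneg _) hyr _))
    (mem_Ioo.2 ⟨neg_neg_iff_pos.mpr hr0, hr0⟩)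
    (by
      refine summable_zero.congr fun p => ?_
      have : (p.1.2 : ℕ) ≠ 0 := Nat.one_le_iff_ne_zero.mp p.1.2.one_le
      simp [zero_pow this])
    (mem_Ioo.2 ⟨neg_lt_of_abs_lt hxr, lt_of_abs_lt hxr⟩)
  exact H

lemma Li21_deriv_tsum_eq {x : ℝ} (hx : |x| < 1) :
    (∑' p : Li21Idx, x ^ ((p.1.2 : ℕ) - 1) / (((p.1.1 : ℕ) : ℝ)) ^ 2)
      = (1 - x)⁻¹ * Li 2 x := by
  have hsum : Summable (fun p : Li21Idx => x ^ ((p.1.2 : ℕ) - 1) / (((p.1.1 : ℕ) : ℝ)) ^ 2) := by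
    refine Summable.of_norm_bounded
      (Li21_summable_bound (r := (|x| + 1) / 2) (by positivity) (by linarith)) fun p => ?_
    have h1 : ‖x ^ ((p.1.2 : ℕ) - 1) / (((p.1.1 : ℕ) : ℝ)) ^ 2‖
        = |x| ^ ((p.1.2 : ℕ) - 1) / (((p.1.1 : ℕ) : ℝ)) ^ 2 := by
      rw [norm_div, norm_pow, norm_pow, Real.norm_eq_abs, Real.norm_eq_abs,
        abs_of_nonneg (show (0:ℝ) ≤ ((p.1.1 : ℕ) : ℝ) from Nat.cast_nonneg _)]
    rw [h1]
    have hmpos : (0:ℝ) < ((p.1.1 : ℕ) : ℝ) := by exact_mod_cast p.1.1.pos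
    exact (div_le_div_iff_of_pos_right (by positivity)).mpr
      (pow_le_pow_left₀ (abs_nonneg _) (by linarith [abs_nonneg x]) _)
  rw [← pairEquiv.tsum_eq
    (fun p : Li21Idx => x ^ ((p.1.2 : ℕ) - 1) / (((p.1.1 : ℕ) : ℝ)) ^ 2)]
  have hsum2 : Summable (fun c : ℕ × ℕ =>
      x ^ (((pairEquiv c).1.2 : ℕ) - 1) / ((((pairEquiv c).1.1 : ℕ)) : ℝ) ^ 2) := by
    exact hsum.comp_injective pairEquiv.injective
  rw [Summable.tsum_prod' hsum2 hsum2.prod_factor]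
  have hgeom : ∑' b : ℕ, x ^ b = (1 - x)⁻¹ :=
    tsum_geometric_of_norm_lt_one (by rwa [Real.norm_eq_abs])
  have hinner : ∀ a : ℕ,
      (∑' b : ℕ, x ^ ((((pairEquiv (a, b)).1.2 : ℕ)) - 1)
        / ((((pairEquiv (a, b)).1.1 : ℕ) : ℝ)) ^ 2)
      = (x ^ (a + 1) / ((a : ℝ) + 1) ^ 2) * (1 - x)⁻¹ := by
    intro a
    have hterm : ∀ b : ℕ,
        x ^ ((((pairEquiv (a, b)).1.2 : ℕ)) - 1) / ((((pairEquiv (a, b)).1.1 : ℕ) : ℝ)) ^ 2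
        = (x ^ (a + 1) / ((a : ℝ) + 1) ^ 2) * x ^ b := by
      intro b
      show x ^ (a + b + 2 - 1) / (((a + 1 : ℕ) : ℝ)) ^ 2 = _
      rw [show a + b + 2 - 1 = (a + 1) + b by omega, pow_add]
      push_cast
      ring
    rw [tsum_congr hterm, tsum_mul_left, hgeom]
  rw [tsum_congr hinner, tsum_mul_right, ← Li]
  ring

lemma Li21_zero : Li21 0 = 0 := by
  rw [Li21]
  convert tsum_zero with p
  have : (p.1.2 : ℕ) ≠ 0 := Nat.one_le_iff_ne_zero.mp p.1.2.one_le
  simp [zero_pow this]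

lemma tendsto_Li21_zero : Tendsto Li21 (𝓝[>] (0:ℝ)) (𝓝 0) := by
  have h : Tendsto Li21 (𝓝 (0:ℝ)) (𝓝 (Li21 0)) :=
    (Li21_hasDerivAt (by norm_num : |(0:ℝ)| < 1)).continuousAt.tendsto
  have h2 := h.mono_left (nhdsWithin_le_nhds (s := Ioi (0:ℝ)))
  rwa [Li21_zero] at h2

/-- Expression of `Li_{(2,1)}(z)` via classical polylogarithms at `1 − z`. -/
theorem Li21_eq (z : ℝ) (h0 : 0 < z) (h1 : z < 1) :
    Li21 z = -(Real.pi ^ 2 / 6) * Real.log (1 - z) - 2 * zeta3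
      - Li 2 (1 - z) * Real.log (1 - z) + 2 * Li 3 (1 - z) := by
  set F : ℝ → ℝ := fun x => -(Real.pi ^ 2 / 6) * Real.log (1 - x) - 2 * zeta3
      - Li 2 (1 - x) * Real.log (1 - x) + 2 * Li 3 (1 - x) - Li21 x with hF
  have hd : ∀ x ∈ Ioo (0:ℝ) 1, HasDerivAt F 0 x := by
    intro x hx
    have hx0 : x ≠ 0 := ne_of_gt hx.1
    have hx1 : (1:ℝ) - x ≠ 0 := by have := hx.2; intro h; linarith [sub_eq_zero.mp h]
    have hx1' : (0:ℝ) < 1 - x := by linarith [hx.2]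
    have hlog := hasDerivAt_log_one_sub hx.2
    have hLi2c := hasDerivAt_Li2_one_sub hx
    have hLi3c := hasDerivAt_Li3_one_sub hx
    have hLi21 := Li21_hasDerivAt (abs_lt_one_of_Ioo hx)
    rw [Li21_deriv_tsum_eq (abs_lt_one_of_Ioo hx)] at hLi21
    have H := (((((hlog.const_mul (-(Real.pi ^ 2 / 6))).sub
      (hasDerivAt_const x (2 * zeta3))).sub (hLi2c.mul hlog)).add
      (hLi3c.const_mul 2)).sub hLi21)
    have hrefl := Li2_reflection hx
    refine H.congr_deriv ?_
    have : Li 2 x = Real.pi ^ 2 / 6 - Li 2 (1 - x) - Real.log x * Real.log (1 - x) := by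
      linarith [hrefl]
    rw [this]
    field_simp
    ring
  have hlim : Tendsto F (𝓝[>] (0:ℝ)) (𝓝 0) := by
    have l1 := tendsto_log_one_sub
    have l2 := tendsto_Li_one_sub 2 le_rfl
    have l3 := tendsto_Li_one_sub 3 (by norm_num)
    have l4 := tendsto_Li21_zero
    have H := (((((l1.const_mul (-(Real.pi ^ 2 / 6))).sub
      (tendsto_const_nhds (x := 2 * zeta3))).sub (l2.mul l1)).add
      (l3.const_mul 2)).sub l4)
    have heq : -(Real.pi ^ 2 / 6) * 0 - 2 * zeta3 - Li 2 1 * 0 + 2 * Li 3 1 - 0 = 0 := by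
      rw [Li_three_one]
      ring
    rw [heq] at H
    exact H
  have := eq_const_aux hd hlim z ⟨h0, h1⟩
  rw [hF] at this
  simp only at this
  linarith [this]
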